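/- In a CAT(0) space, for a bounded set S and any point x in the closed convex hull of S, sup_{q ∈ closure(convexHull S)} d(x, q) = sup_{q ∈ S} d(x, q). -/

import Mathlib

/-- `γ` restricted to `[a,b]` is a unit-speed (arc-length parameterized) geodesic segment. -/
def IsGeodesicOn {X : Type*} [MetricSpace X] (γ : ℝ → X) (a b : ℝ) : Prop :=
  ∀ s ∈ Set.Icc a b, ∀ t ∈ Set.Icc a b, dist (γ s) (γ t) = |s - t|

/-- A CAT(0) (NPC) space: a geodesic metric space satisfying the triangle comparison
inequality `d(z,x_λ)² ≤ (1-λ)d(z,x₀)² + λ d(z,x₁)² - λ(1-λ)d(x₀,x₁)²`. -/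
def CAT0 (X : Type*) [MetricSpace X] : Prop :=
  (∀ x y : X, ∃ γ : ℝ → X, IsGeodesicOn γ 0 (dist x y) ∧ γ 0 = x ∧ γ (dist x y) = y) ∧
  (∀ x y z : X, ∀ γ : ℝ → X, IsGeodesicOn γ 0 (dist x y) → γ 0 = x → γ (dist x y) = y →
    ∀ l ∈ Set.Icc (0:ℝ) 1,
      dist z (γ (l * dist x y)) ^ 2 ≤
        (1 - l) * dist z x ^ 2 + l * dist z y ^ 2 - l * (1 - l) * dist x y ^ 2)

/-- A subset is (geodesically) convex if every geodesic between two of its points lies in it. -/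
def GeodConvex {X : Type*} [MetricSpace X] (F : Set X) : Prop :=
  ∀ x ∈ F, ∀ y ∈ F, ∀ γ : ℝ → X, IsGeodesicOn γ 0 (dist x y) → γ 0 = x → γ (dist x y) = y →
    ∀ t ∈ Set.Icc 0 (dist x y), γ t ∈ F


/-- The closed convex hull: the intersection of all closed geodesically convex sets
containing `A`. -/
def metricClosedConvexHull {X : Type*} [MetricSpace X] (A : Set X) : Set X :=
  ⋂₀ {C : Set X | A ⊆ C ∧ IsClosed C ∧ GeodConvex C}

/-- In a CAT(0) space, for a bounded set `S` and any point `x` of the closed convex hull of `S`,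
the supremum of distances from `x` to the closed convex hull equals the supremum of distances
from `x` to `S`. -/
theorem stmt_11 {X : Type*} [MetricSpace X] (hX : CAT0 X)
    (S : Set X) (hbd : Bornology.IsBounded S)
    (x : X) (hx : x ∈ metricClosedConvexHull S) :
    (⨆ q : metricClosedConvexHull S, dist x q) = ⨆ q : S, dist x q := by
  -- S is nonempty
  have hSne : S.Nonempty := by
    by_contra h
    rw [Set.not_nonempty_iff_eq_empty] at h
    subst h
    exact hx (∅ : Set X) ⟨Set.empty_subset _, isClosed_empty,
      fun a ha => absurd ha (Set.notMem_empty a)⟩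
  -- boundedness of distances from x on S
  obtain ⟨r, hr⟩ := hbd.subset_closedBall x
  have bddS : BddAbove (Set.range fun q : S => dist x q) := by
    refine ⟨r, ?_⟩
    rintro _ ⟨q, rfl⟩
    have := hr q.2
    rw [Metric.mem_closedBall] at this
    show dist x q.1 ≤ r
    rw [dist_comm]; exact this
  set R : ℝ := ⨆ q : S, dist x q with hR
  have hR0 : 0 ≤ R := by
    obtain ⟨s, hs⟩ := hSne
    exact le_trans dist_nonneg (le_ciSup bddS ⟨s, hs⟩)
  -- the closed ball of radius R around x is closed and geodesically convex
  set B : Set X := {q | dist x q ≤ R} with hB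
  have hclosed : IsClosed B :=
    isClosed_le (Continuous.dist continuous_const continuous_id) continuous_const
  have hconv : GeodConvex B := by
    intro a ha b hb γ hγ h0 h1 t ht
    rcases eq_or_lt_of_le (dist_nonneg (x:=a) (y:=b)) with hd | hd
    · have ht0 : t = 0 := le_antisymm (by rw [← hd] at ht; exact ht.2) ht.1
      rw [ht0, h0]; exact ha
    · set l := t / dist a b with hl
      have hl0 : 0 ≤ l := div_nonneg ht.1 (le_of_lt hd)
      have hl1 : l ≤ 1 := (div_le_one hd).2 ht.2
      have htl : t = l * dist a b := by rw [hl, div_mul_cancel₀]; exact ne_of_gt hd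
      have key := hX.2 a b x γ hγ h0 h1 l ⟨hl0, hl1⟩
      rw [← htl] at key
      have hxa : dist x a ≤ R := ha
      have hxb : dist x b ≤ R := hb
      have hd2 : (0:ℝ) ≤ dist a b ^ 2 := sq_nonneg _
      have h2 : dist x (γ t) ^ 2 ≤ R ^ 2 := by
        nlinarith [pow_le_pow_left₀ (dist_nonneg (x:=x) (y:=a)) hxa 2, pow_le_pow_left₀ (dist_nonneg (x:=x) (y:=b)) hxb 2,
          mul_nonneg (mul_nonneg hl0 (sub_nonneg.2 hl1)) hd2]
      show dist x (γ t) ≤ R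
      nlinarith [h2, dist_nonneg (x := x) (y := γ t), hR0]
  have hSB : S ⊆ B := fun q hq => le_ciSup bddS ⟨q, hq⟩
  have hHB : metricClosedConvexHull S ⊆ B :=
    Set.sInter_subset_of_mem ⟨hSB, hclosed, hconv⟩
  have hSH : S ⊆ metricClosedConvexHull S := fun s hs C hC => hC.1 hs
  have bddH : BddAbove (Set.range fun q : metricClosedConvexHull S => dist x q) := by
    refine ⟨R, ?_⟩
    rintro _ ⟨q, rfl⟩
    exact hHB q.2
  have hne : Nonempty (metricClosedConvexHull S : Set X) := ⟨⟨x, hx⟩⟩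
  have hneS : Nonempty S := hSne.to_subtype
  refine le_antisymm ?_ ?_
  · exact ciSup_le fun q => hHB q.2
  · exact ciSup_le fun q => le_ciSup bddH (⟨q.1, hSH q.2⟩ :
      (metricClosedConvexHull S : Set X))
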